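/- For n ≡ 0 or 3 (mod 4), the proportion bal_{S}(n)/n! of bw-balanced permutations of {1,...,n} is asymptotic to √(8/(πn)) along such n, i.e., lim (bal_S(n)/n!) · √(πn/8) = 1 as n → ∞ through n ≡ 0, 3 (mod 4). -/

import Mathlib

/-- Black contribution of letter `h` at (1-based) index `i`. -/
def blackC (i h : ℕ) : ℕ := if Odd i then (h + 1) / 2 else h / 2

/-- White contribution of letter `h` at (1-based) index `i`. -/
def whiteC (i h : ℕ) : ℕ := if Odd i then h / 2 else (h + 1) / 2

/-- Number of black cells in the bargraph of the word `w`. -/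
def black {n : ℕ} (w : Fin n → ℕ) : ℕ := ∑ i : Fin n, blackC (i.1 + 1) (w i)

/-- Number of white cells in the bargraph of the word `w`. -/
def white {n : ℕ} (w : Fin n → ℕ) : ℕ := ∑ i : Fin n, whiteC (i.1 + 1) (w i)

/-- The number of bw-balanced permutations of `{1,...,n}`. -/
def balS (n : ℕ) : ℕ :=
  (Finset.univ.filter fun π : Equiv.Perm (Fin n) =>
      black (fun i => (π i).1 + 1) = white (fun i => (π i).1 + 1)).card

open Finset Equiv

lemma black_eq {n : ℕ} (w : Fin n → ℕ) :
    black w = (∑ i : Fin n, w i / 2) +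
      (univ.filter fun i : Fin n => Even i.1 ∧ Odd (w i)).card := by
  rw [black, card_filter, ← Finset.sum_add_distrib]
  refine Finset.sum_congr rfl fun i _ => ?_
  simp only [blackC, Nat.odd_iff, Nat.even_iff]
  split_ifs <;> omega

lemma white_eq {n : ℕ} (w : Fin n → ℕ) :
    white w = (∑ i : Fin n, w i / 2) +
      (univ.filter fun i : Fin n => ¬ Even i.1 ∧ Odd (w i)).card := by
  rw [white, card_filter, ← Finset.sum_add_distrib]
  refine Finset.sum_congr rfl fun i _ => ?_
  simp only [whiteC, Nat.odd_iff, Nat.even_iff]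
  split_ifs <;> omega

section CountSection

variable {n : ℕ}

def fiberEquiv (U V : Finset (Fin n)) :
    {π : Equiv.Perm (Fin n) // ∀ i, i ∈ U ↔ π i ∈ V} ≃
      (({i : Fin n // i ∈ U} ≃ {i : Fin n // i ∈ V}) ×
       ({i : Fin n // ¬ i ∈ U} ≃ {i : Fin n // ¬ i ∈ V})) where
  toFun π := ⟨Equiv.subtypeEquiv π.1 π.2,
    Equiv.subtypeEquiv π.1 (fun i => not_iff_not.mpr (π.2 i))⟩
  invFun p := ⟨(Equiv.sumCompl (· ∈ U)).symm.trans ((p.1.sumCongr p.2).trans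
      (Equiv.sumCompl (· ∈ V))), by
    intro i
    by_cases h : i ∈ U
    · simp only [Equiv.trans_apply, Equiv.sumCompl_symm_apply_of_pos h,
        Equiv.sumCongr_apply, Sum.map_inl, Equiv.sumCompl_apply_inl]
      exact ⟨fun _ => (p.1 ⟨i, h⟩).2, fun _ => h⟩
    · simp [Equiv.sumCompl_symm_apply_of_neg h, Subtype.coe_prop, h]
      exact (p.2 ⟨i, h⟩).2⟩
  left_inv := by
    rintro ⟨π, hπ⟩
    ext i
    by_cases h : i ∈ U
    · simp [Equiv.sumCompl_symm_apply_of_pos h]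
    · simp [Equiv.sumCompl_symm_apply_of_neg h]
  right_inv := by
    rintro ⟨e1, e2⟩
    refine Prod.ext ?_ ?_
    · ext ⟨i, hi⟩
      simp [Equiv.sumCompl_symm_apply_of_pos hi]
    · ext ⟨i, hi⟩
      simp [Equiv.sumCompl_symm_apply_of_neg hi]

lemma card_fiber (U V : Finset (Fin n)) (h1 : U.card = V.card) :
    (univ.filter fun π : Equiv.Perm (Fin n) => ∀ i, i ∈ U ↔ π i ∈ V).card
      = U.card.factorial * (n - U.card).factorial := by
  have h := Fintype.card_congr (fiberEquiv U V)
  rw [Fintype.card_subtype] at h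
  rw [h, Fintype.card_prod]
  have e1 : {i : Fin n // i ∈ U} ≃ {i : Fin n // i ∈ V} :=
    Fintype.equivOfCardEq (by simp [Fintype.card_coe, h1])
  have e2 : {i : Fin n // ¬ i ∈ U} ≃ {i : Fin n // ¬ i ∈ V} :=
    Fintype.equivOfCardEq (by simp [Fintype.card_subtype_compl, Fintype.card_coe, h1])
  rw [Fintype.card_equiv e1, Fintype.card_equiv e2]
  congr 2
  · simp [Fintype.card_coe]
  · simp [Fintype.card_subtype_compl, Fintype.card_coe]

lemma card_U (V : Finset (Fin n)) (π : Equiv.Perm (Fin n)) :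
    (univ.filter fun i => π i ∈ V).card = V.card := by
  have : (univ.filter fun i => π i ∈ V) = V.map π.symm.toEmbedding := by
    ext i
    simp only [mem_filter, mem_univ, true_and, Finset.mem_map, Equiv.coe_toEmbedding]
    constructor
    · exact fun h => ⟨π i, h, π.symm_apply_apply i⟩
    · rintro ⟨v, hv, rfl⟩; simpa using hv
  rw [this, Finset.card_map]

lemma count_main (V : Finset (Fin n)) (m : ℕ) (hV : V.card = 2 * m) :
    (univ.filter fun π : Equiv.Perm (Fin n) =>
        ((univ.filter fun i => π i ∈ V) ∩ V).card = m).card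
      = (2*m).factorial * (n-2*m).factorial * ((2*m).choose m * (n-2*m).choose m) := by
  classical
  set B : Finset (Finset (Fin n)) :=
    univ.filter (fun A => (A ∩ V).card = m ∧ (A \ V).card = m) with hB
  have hcards : ∀ A : Finset (Fin n), (A \ V).card + (A ∩ V).card = A.card :=
    fun A => Finset.card_sdiff_add_card_inter A V
  have key := Finset.card_eq_sum_card_fiberwise
    (f := fun π : Equiv.Perm (Fin n) => univ.filter fun i => π i ∈ V)
    (s := univ.filter fun π : Equiv.Perm (Fin n) =>
        ((univ.filter fun i => π i ∈ V) ∩ V).card = m)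
    (t := B) ?_
  · rw [key]
    have hfib : ∀ b ∈ B,
        ((univ.filter fun π : Equiv.Perm (Fin n) =>
            ((univ.filter fun i => π i ∈ V) ∩ V).card = m).filter
          (fun π => (univ.filter fun i => π i ∈ V) = b)).card
        = (2*m).factorial * (n-2*m).factorial := by
      intro b hb
      rw [hB, mem_filter] at hb
      have hbcard : b.card = 2 * m := by
        have := hcards b; omega
      have heq : ((univ.filter fun π : Equiv.Perm (Fin n) =>
            ((univ.filter fun i => π i ∈ V) ∩ V).card = m).filter
          (fun π => (univ.filter fun i => π i ∈ V) = b))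
          = univ.filter fun π : Equiv.Perm (Fin n) => ∀ i, i ∈ b ↔ π i ∈ V := by
        ext π
        simp only [mem_filter, mem_univ, true_and]
        constructor
        · rintro ⟨-, rfl⟩
          intro i; simp
        · intro h
          have hfb : (univ.filter fun i => π i ∈ V) = b := by
            ext i; simp [h i]
          rw [hfb]
          exact ⟨hb.2.1, rfl⟩
      rw [heq, card_fiber b V (by omega), hbcard]
    rw [Finset.sum_congr rfl hfib, Finset.sum_const, smul_eq_mul]
    have hBcard : B.card = (2*m).choose m * (n-2*m).choose m := by
      have hbij : B.card = ((V.powersetCard m) ×ˢ (Vᶜ.powersetCard m)).card := by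
        apply Finset.card_bij' (fun A _ => (A ∩ V, A \ V))
          (fun p _ => p.1 ∪ p.2)
        · intro A hA
          rw [hB, mem_filter] at hA
          simp only [Finset.mem_product, Finset.mem_powersetCard]
          refine ⟨⟨Finset.inter_subset_right, hA.2.1⟩, ⟨?_, hA.2.2⟩⟩
          intro i hi
          rw [Finset.mem_compl]
          exact (Finset.mem_sdiff.mp hi).2
        · intro p hp
          simp only [Finset.mem_product, Finset.mem_powersetCard] at hp
          rw [hB, mem_filter]
          have h1 : (p.1 ∪ p.2) ∩ V = p.1 := by
            ext i
            simp only [Finset.mem_inter, Finset.mem_union]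
            constructor
            · rintro ⟨h | h, hv⟩
              · exact h
              · exact absurd hv (Finset.mem_compl.mp (hp.2.1 h))
            · exact fun h => ⟨Or.inl h, hp.1.1 h⟩
          have h2 : (p.1 ∪ p.2) \ V = p.2 := by
            ext i
            simp only [Finset.mem_sdiff, Finset.mem_union]
            constructor
            · rintro ⟨h | h, hv⟩
              · exact absurd (hp.1.1 h) hv
              · exact h
            · exact fun h => ⟨Or.inr h, Finset.mem_compl.mp (hp.2.1 h)⟩
          exact ⟨mem_univ _, by rw [h1, hp.1.2], by rw [h2, hp.2.2]⟩
        · intro A hA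
          ext i
          simp only [Finset.mem_union, Finset.mem_inter, Finset.mem_sdiff]
          tauto
        · intro p hp
          simp only [Finset.mem_product, Finset.mem_powersetCard] at hp
          have h1 : (p.1 ∪ p.2) ∩ V = p.1 := by
            ext i
            simp only [Finset.mem_inter, Finset.mem_union]
            constructor
            · rintro ⟨h | h, hv⟩
              · exact h
              · exact absurd hv (Finset.mem_compl.mp (hp.2.1 h))
            · exact fun h => ⟨Or.inl h, hp.1.1 h⟩
          have h2 : (p.1 ∪ p.2) \ V = p.2 := by
            ext i
            simp only [Finset.mem_sdiff, Finset.mem_union]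
            constructor
            · rintro ⟨h | h, hv⟩
              · exact absurd (hp.1.1 h) hv
              · exact h
            · exact fun h => ⟨Or.inr h, Finset.mem_compl.mp (hp.2.1 h)⟩
          rw [h1, h2]
      rw [hbij, Finset.card_product, Finset.card_powersetCard, Finset.card_powersetCard,
        hV, Finset.card_compl, Fintype.card_fin, hV]
    rw [hBcard]; ring
  · intro π hπ
    rw [Finset.mem_coe, mem_filter] at hπ
    rw [Finset.mem_coe, hB, mem_filter]
    have h1 := hcards (univ.filter fun i => π i ∈ V)
    have h2 : (univ.filter fun i => π i ∈ V).card = 2 * m := by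
      rw [card_U V π, hV]
    refine ⟨mem_univ _, hπ.2, ?_⟩
    show ((univ.filter fun i => π i ∈ V) \ V).card = m
    omega

end CountSection

lemma sum_range_even (n : ℕ) :
    ∑ i ∈ Finset.range n, (if Even i then 1 else 0) = (n+1)/2 := by
  induction n with
  | zero => simp
  | succ k ih =>
    rw [Finset.sum_range_succ, ih]
    simp only [Nat.even_iff]
    split_ifs <;> omega

lemma card_V (n : ℕ) : (univ.filter fun i : Fin n => Even i.1).card = (n+1)/2 := by
  rw [card_filter]
  rw [Fin.sum_univ_eq_sum_range (fun j => if Even j then 1 else 0)]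
  exact sum_range_even n

lemma balS_eq {n : ℕ} (m : ℕ) (hn : (n+1)/2 = 2*m) :
    balS n = (2*m).factorial * (n-2*m).factorial * ((2*m).choose m * (n-2*m).choose m) := by
  classical
  set V : Finset (Fin n) := univ.filter fun i : Fin n => Even i.1 with hVdef
  have hV : V.card = 2*m := by rw [hVdef, card_V, hn]
  rw [balS, ← count_main V m hV]
  congr 1
  apply filter_congr
  intro π _
  rw [black_eq, white_eq, add_right_inj]
  have hA : (univ.filter fun i : Fin n => Even i.1 ∧ Odd ((π i).1 + 1))
      = (univ.filter fun i => π i ∈ V) ∩ V := by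
    ext i
    simp [hVdef, Nat.odd_add_one, Nat.not_odd_iff_even, and_comm]
  have hBs : (univ.filter fun i : Fin n => ¬ Even i.1 ∧ Odd ((π i).1 + 1))
      = (univ.filter fun i => π i ∈ V) \ V := by
    ext i
    simp [hVdef, Nat.odd_add_one, Nat.not_odd_iff_even, and_comm]
  rw [hA, hBs]
  have h1 : ((univ.filter fun i => π i ∈ V) \ V).card
      + ((univ.filter fun i => π i ∈ V) ∩ V).card
      = (univ.filter fun i => π i ∈ V).card :=
    Finset.card_sdiff_add_card_inter _ _
  have h2 : (univ.filter fun i => π i ∈ V).card = 2*m := by rw [card_U, hV]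
  omega

lemma choose_two_mul_succ (k : ℕ) :
    (2*k+2).choose (k+1) = 2 * ((2*k+1).choose (k+1)) := by
  have h : (2*k+1+1).choose (k+1) = (2*k+1).choose k + (2*k+1).choose (k+1) :=
    Nat.choose_succ_succ (2*k+1) k
  have hs : (2*k+1).choose k = (2*k+1).choose (k+1) := by
    have h2 := Nat.choose_symm (show k+1 ≤ 2*k+1 by omega)
    simpa [show 2*k+1-(k+1) = k by omega] using h2
  have : 2*k+1+1 = 2*k+2 := by ring
  rw [this] at h
  omega

lemma key_nat (m n : ℕ) (hm : 1 ≤ m) (hn : n = 4*m ∨ n = 4*m-1) :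
    (2*m).factorial * (n-2*m).factorial * ((2*m).choose m * (n-2*m).choose m)
      * Nat.centralBinom (2*m)
    = n.factorial * Nat.centralBinom m ^ 2 := by
  rcases hn with rfl | rfl
  · have h4 : (4*m).choose (2*m) * (2*m).factorial * (2*m).factorial
        = (4*m).factorial := by
      have := Nat.choose_mul_factorial_mul_factorial (show 2*m ≤ 4*m by omega)
      simpa [show 4*m - 2*m = 2*m by omega] using this
    rw [Nat.centralBinom, Nat.centralBinom,
      show 2*(2*m) = 4*m from by ring, show 4*m-2*m = 2*m from by omega, ← h4]
    ring
  · obtain ⟨k, rfl⟩ : ∃ k, m = k+1 := ⟨m-1, by omega⟩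
    rw [Nat.centralBinom, Nat.centralBinom,
      show 4*(k+1)-1 = 4*k+3 from by omega,
      show 4*k+3-2*(k+1) = 2*k+1 from by omega,
      show 2*(2*(k+1)) = 4*k+4 from by ring,
      show 2*(k+1) = 2*k+2 from by ring]
    have hc1 : (2*k+2).choose (k+1) = 2 * ((2*k+1).choose (k+1)) :=
      choose_two_mul_succ k
    have hc2 : (4*k+4).choose (2*k+2) = 2 * ((4*k+3).choose (2*k+2)) := by
      have := choose_two_mul_succ (2*k+1)
      simpa [show 2*(2*k+1)+2 = 4*k+4 from by ring, show 2*(2*k+1)+1 = 4*k+3 from by ring,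
        show 2*k+1+1 = 2*k+2 from by ring] using this
    have hc3 : (4*k+3).choose (2*k+2) * (2*k+2).factorial * (2*k+1).factorial
        = (4*k+3).factorial := by
      have := Nat.choose_mul_factorial_mul_factorial (show 2*k+2 ≤ 4*k+3 by omega)
      simpa [show 4*k+3-(2*k+2) = 2*k+1 from by omega] using this
    rw [hc1, hc2, ← hc3]
    ring

open Filter Real Stirling Topology

noncomputable def cseq (k : ℕ) : ℝ :=
  (Nat.centralBinom k : ℝ) * Real.sqrt (Real.pi * k) / 4 ^ k

lemma cseq_eq (k : ℕ) (hk : k ≠ 0) :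
    cseq k = Real.sqrt Real.pi * (stirlingSeq (2*k) / (stirlingSeq k)^2) := by
  have hk0 : (0:ℝ) < k := by positivity
  have hf : (((2*k).factorial : ℕ) : ℝ)
      = (Nat.centralBinom k : ℝ) * (k.factorial * k.factorial) := by
    have h := Nat.choose_mul_factorial_mul_factorial (show k ≤ 2*k by omega)
    rw [show 2*k - k = k by omega] at h
    rw [Nat.centralBinom]
    push_cast [← h]
    ring
  have hsqrt4 : Real.sqrt (2*((2*k : ℕ):ℝ)) = 2 * Real.sqrt k := by
    push_cast
    rw [show (2:ℝ)*(2*(k:ℝ)) = 2^2 * k by ring, Real.sqrt_mul (by positivity),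
      Real.sqrt_sq (by norm_num)]
  have hsqrt2 : Real.sqrt (2*(k:ℝ)) = Real.sqrt 2 * Real.sqrt k :=
    Real.sqrt_mul (by norm_num) _
  have hpow : (((2*k:ℕ):ℝ)/Real.exp 1)^(2*k)
      = 2^(2*k) * (((k:ℝ)/Real.exp 1)^k)^2 := by
    push_cast
    rw [show (2*(k:ℝ))/Real.exp 1 = 2 * ((k:ℝ)/Real.exp 1) by ring, mul_pow,
      ← pow_mul, mul_comm 2 k]
  have h4 : (4:ℝ)^k = 2^(2*k) := by
    rw [show (4:ℝ) = 2^2 by norm_num, ← pow_mul]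
  have hπk : Real.sqrt (Real.pi * k) = Real.sqrt Real.pi * Real.sqrt k :=
    Real.sqrt_mul Real.pi_pos.le _
  have hsk : Real.sqrt (k:ℝ) ≠ 0 := by positivity
  have hs2 : Real.sqrt 2 ≠ 0 := by positivity
  have hx : ((k:ℝ)/Real.exp 1)^k ≠ 0 := by positivity
  have hfk : ((k.factorial : ℕ) : ℝ) ≠ 0 := by positivity
  have h2k : (2:ℝ)^(2*k) ≠ 0 := by positivity
  rw [cseq, stirlingSeq, stirlingSeq, hf, hsqrt4, hsqrt2, hpow, h4, hπk]
  have hsq2 : Real.sqrt 2 ^ 2 = 2 := Real.sq_sqrt (by norm_num)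
  field_simp
  ring_nf
  rw [hsq2]

lemma tendsto_two_mul : Tendsto (fun k : ℕ => 2*k) atTop atTop :=
  tendsto_atTop.2 fun b => eventually_atTop.2 ⟨b, fun n hn => by omega⟩

lemma cseq_tendsto : Tendsto cseq atTop (𝓝 1) := by
  have h1 : Tendsto (fun k => stirlingSeq (2*k)) atTop (𝓝 (Real.sqrt Real.pi)) :=
    tendsto_stirlingSeq_sqrt_pi.comp tendsto_two_mul
  have h2 : Tendsto (fun k => (stirlingSeq k)^2) atTop (𝓝 ((Real.sqrt Real.pi)^2)) :=
    tendsto_stirlingSeq_sqrt_pi.pow 2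
  have hπ : Real.sqrt Real.pi ≠ 0 := by positivity
  have h3 : Tendsto (fun k => Real.sqrt Real.pi * (stirlingSeq (2*k) / (stirlingSeq k)^2))
      atTop (𝓝 (Real.sqrt Real.pi * (Real.sqrt Real.pi / (Real.sqrt Real.pi)^2))) :=
    (h1.div h2 (by positivity)).const_mul _
  have hval : Real.sqrt Real.pi * (Real.sqrt Real.pi / (Real.sqrt Real.pi)^2) = 1 := by
    rw [sq]
    field_simp
  rw [hval] at h3
  exact h3.congr' (by filter_upwards [eventually_ne_atTop 0] with k hk
    using (cseq_eq k hk).symm)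

lemma sqrt_lemma (m n : ℕ) (hm : m ≠ 0) :
    (Real.pi * m / Real.sqrt (Real.pi * (2*m))) * Real.sqrt ((n:ℝ)/(4*m))
      = Real.sqrt (Real.pi * n / 8) := by
  have hm0 : (0:ℝ) < m := by positivity
  have h1 : Real.pi * m / Real.sqrt (Real.pi*(2*m))
      = Real.sqrt ((Real.pi*m)^2 / (Real.pi*(2*m))) := by
    rw [Real.sqrt_div (sq_nonneg _), Real.sqrt_sq (by positivity)]
  rw [h1, ← Real.sqrt_mul (by positivity)]
  congr 1
  have hπ := Real.pi_pos
  field_simp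
  ring

theorem stmt_18 :
    Filter.Tendsto
      (fun n : ℕ => (balS n : ℝ) / (n.factorial : ℝ) * Real.sqrt (Real.pi * n / 8))
      (Filter.atTop ⊓ Filter.principal {n : ℕ | n % 4 = 0 ∨ n % 4 = 3})
      (nhds 1) := by
  set L := Filter.atTop ⊓ Filter.principal {n : ℕ | n % 4 = 0 ∨ n % 4 = 3} with hL
  set M : ℕ → ℕ := fun n => (n+1)/4 with hM
  have hMtop : Tendsto M atTop atTop :=
    tendsto_atTop.2 fun b => eventually_atTop.2 ⟨4*b, fun n hn => by simp only [hM]; omega⟩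
  have hML : Tendsto M L atTop := hMtop.mono_left inf_le_left
  have hc1 : Tendsto (fun n => cseq (M n)) L (𝓝 1) := cseq_tendsto.comp hML
  have hc2 : Tendsto (fun n => cseq (2 * M n)) L (𝓝 1) :=
    cseq_tendsto.comp (tendsto_two_mul.comp hML)
  -- eventual facts on L
  have hev : ∀ᶠ n in L, (n ∈ {n : ℕ | n % 4 = 0 ∨ n % 4 = 3}) ∧ 3 ≤ n := by
    refine Filter.Eventually.and ?_ ?_
    · exact (Filter.eventually_inf_principal).2 (Filter.Eventually.of_forall fun n h => h)
    · exact (eventually_ge_atTop 3).filter_mono inf_le_left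
  have hr : Tendsto (fun n : ℕ => (n:ℝ)/(4 * M n)) L (𝓝 1) := by
    have hlow : Tendsto (fun n : ℕ => (n:ℝ)/(n+1)) L (𝓝 1) :=
      (tendsto_natCast_div_add_atTop (1:ℝ)).mono_left inf_le_left
    refine tendsto_of_tendsto_of_tendsto_of_le_of_le' hlow tendsto_const_nhds ?_ ?_
    · filter_upwards [hev] with n hn
      have h1 : 4 * M n ≤ n + 1 ∧ n ≤ 4 * M n ∧ 1 ≤ M n := by
        simp only [hM]; rcases hn.1 with h | h <;> omega
      have h40 : (0:ℝ) < 4 * M n := by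
        have := h1.2.2; positivity
      gcongr
      · exact_mod_cast h1.1
    · filter_upwards [hev] with n hn
      have h1 : n ≤ 4 * M n ∧ 1 ≤ M n := by
        simp only [hM]; rcases hn.1 with h | h <;> omega
      have h40 : (0:ℝ) < 4 * M n := by have := h1.2; positivity
      rw [div_le_one h40]
      exact_mod_cast h1.1
  have hsq : Tendsto (fun n : ℕ => Real.sqrt ((n:ℝ)/(4 * M n))) L (𝓝 1) := by
    have h := (Real.continuous_sqrt.tendsto 1).comp hr
    rw [Real.sqrt_one] at h
    exact h
  have hG : Tendsto (fun n : ℕ =>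
      cseq (M n)^2 / cseq (2 * M n) * Real.sqrt ((n:ℝ)/(4 * M n))) L (𝓝 1) := by
    have := ((hc1.pow 2).div hc2 one_ne_zero).mul hsq
    simpa using this
  refine hG.congr' ?_
  filter_upwards [hev] with n hn
  obtain ⟨hnS, hn3⟩ := hn
  set m := M n with hmdef
  have hm1 : 1 ≤ m := by simp only [hmdef, hM]; rcases hnS with h | h <;> omega
  have hcase : n = 4*m ∨ n = 4*m-1 := by
    simp only [hmdef, hM]; rcases hnS with h | h <;> omega
  have hn2 : (n+1)/2 = 2*m := by
    simp only [hmdef, hM]; rcases hnS with h | h <;> omega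
  have hkeyN := key_nat m n hm1 hcase
  rw [← balS_eq m hn2] at hkeyN
  have hkey : (balS n : ℝ) * (Nat.centralBinom (2*m) : ℝ)
      = (n.factorial : ℝ) * (Nat.centralBinom m : ℝ)^2 := by exact_mod_cast hkeyN
  have hfac : (n.factorial : ℝ) ≠ 0 := by positivity
  have hcb2 : ((Nat.centralBinom (2*m) : ℕ) : ℝ) ≠ 0 := by
    exact_mod_cast Nat.centralBinom_ne_zero (2*m)
  have hdiv : (balS n : ℝ) / (n.factorial : ℝ)
      = (Nat.centralBinom m : ℝ)^2 / (Nat.centralBinom (2*m) : ℝ) := by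
    rw [div_eq_div_iff hfac hcb2]
    linear_combination hkey
  have hm0 : ((m:ℝ)) ≠ 0 := by positivity
  have hπm : Real.sqrt (Real.pi * m) ^ 2 = Real.pi * m := Real.sq_sqrt (by positivity)
  have hcs : cseq m ^ 2 / cseq (2*m)
      = (Nat.centralBinom m : ℝ)^2 / (Nat.centralBinom (2*m) : ℝ)
        * (Real.pi * m / Real.sqrt (Real.pi * (2*m))) := by
    rw [cseq, cseq, div_pow, mul_pow, hπm]
    have h4m : ((4:ℝ)^m)^2 = 4^(2*m) := by rw [← pow_mul, mul_comm]
    have hs2m : Real.sqrt (Real.pi * (2*m : ℕ)) ≠ 0 := by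
      have : (0:ℝ) < (2*m : ℕ) := by exact_mod_cast Nat.pos_of_ne_zero (by omega)
      positivity
    have h4ne : ((4:ℝ)^m) ≠ 0 := by positivity
    have h4ne2 : ((4:ℝ)^(2*m)) ≠ 0 := by positivity
    rw [← h4m]
    push_cast
    field_simp
  calc cseq (M n)^2 / cseq (2 * M n) * Real.sqrt ((n:ℝ)/(4 * M n))
      = (Nat.centralBinom m : ℝ)^2 / (Nat.centralBinom (2*m) : ℝ)
        * ((Real.pi * m / Real.sqrt (Real.pi * (2*m))) * Real.sqrt ((n:ℝ)/(4*m))) := by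
        rw [← hmdef, hcs]; push_cast; ring
    _ = (balS n : ℝ) / (n.factorial : ℝ) * Real.sqrt (Real.pi * n / 8) := by
        rw [sqrt_lemma m n (by omega), hdiv]
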